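/- arXiv:1305.2391 — 2 statements merged into one kernel-verified Lean document; each statement's English description precedes it below -/
import Mathlib

section
/- Let S be a recursively enumerable set of finite binary strings such that μ(⟦S⟧) < 1 and μ(⟦S⟧) is a computable real. Then there exists a computable infinite binary sequence α with α ∉ ⟦S⟧. -/
open MeasureTheory

/-- The cylinder of infinite binary sequences extending the finite string `x`. -/
def cylinder (x : List Bool) : Set (ℕ → Bool) :=
  {α | ∀ i : Fin x.length, α i.val = x.get i}

/-- `⟦S⟧`: sequences having some prefix in `S`. -/
def openOf (S : Set (List Bool)) : Set (ℕ → Bool) :=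
  ⋃ x ∈ S, cylinder x

/-- `S` is recursively enumerable: it is the set of values of a computable
partial enumeration. -/
def RE (S : Set (List Bool)) : Prop :=
  ∃ e : ℕ → Option (List Bool), Computable e ∧ S = {x | ∃ n, e n = some x}

namespace S13
open List

open Encodable List

/-! ### countP is primrec -/

private theorem countP_eq_filterMap_length (p : β → Bool) (l : List β) :
    l.countP p = (l.filterMap fun b => if p b then some b else none).length := by
  induction l with
  | nil => rfl
  | cons a l ih =>
      by_cases h : p a <;> simp [List.countP_cons, h, List.filterMap_cons, ih]

theorem primrec_countP {α β : Type*} [Primcodable α] [Primcodable β]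
    {f : α → List β} {p : α → β → Bool} (hf : Primrec f) (hp : Primrec₂ p) :
    Primrec fun a => (f a).countP (p a) := by
  have h1 : Primrec₂ fun (a : α) (b : β) => if p a b then some b else none := by
    refine Primrec.ite ?_ (Primrec.option_some.comp Primrec.snd) (Primrec.const none)
    exact PrimrecPred.comp (p := fun b : Bool => b = true) (Primrec.eq.comp .id (.const true)) hp
  have h2 : Primrec fun a => (f a).filterMap fun b => if p a b then some b else none :=
    Primrec.listFilterMap hf h1
  exact (Primrec.list_length.comp h2).of_eq fun a => (countP_eq_filterMap_length _ _).symm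

/-! ### integer and rational codes -/

def icode (z : ℤ) : ℕ := @Encodable.encode ℤ _ z

lemma icode_ofNat (n : ℕ) : icode (Int.ofNat n) = 2 * n := rfl

lemma icode_negSucc (n : ℕ) : icode (Int.negSucc n) = 2 * n + 1 := rfl

lemma icode_natAbs (z : ℤ) : (icode z + 1) / 2 = z.natAbs := by
  cases z with
  | ofNat n => rw [icode_ofNat]; simp [Int.natAbs]; omega
  | negSucc n => rw [icode_negSucc]; simp [Int.natAbs]; omega

def bcode (q : ℚ) : ℕ := Nat.pair (icode q.num) q.den

lemma bcode_eq (q : ℚ) : @Encodable.encode ℚ Rat.instEncodable q = bcode q := rfl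

def copB (a b : ℕ) : Bool :=
  (List.range (b + 1)).countP (fun k => decide (2 ≤ k) && decide (k ∣ a) && decide (k ∣ b)) == 0

lemma copB_iff {a b : ℕ} (hb : 0 < b) : copB a b = true ↔ Nat.Coprime a b := by
  rw [copB, beq_iff_eq, List.countP_eq_zero]
  constructor
  · intro h
    by_contra hcop
    have hg2 : 2 ≤ Nat.gcd a b := by
      have h0 : 0 < Nat.gcd a b := Nat.gcd_pos_of_pos_right a hb
      have h1 : Nat.gcd a b ≠ 1 := fun h => hcop h
      omega
    have := h (Nat.gcd a b) (by
      simp only [List.mem_range]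
      have := Nat.le_of_dvd hb (Nat.gcd_dvd_right a b); omega)
    simp only [Bool.and_eq_true, decide_eq_true_eq] at this
    exact this ⟨⟨hg2, Nat.gcd_dvd_left a b⟩, Nat.gcd_dvd_right a b⟩
  · intro hcop k _ hk
    simp only [Bool.and_eq_true, decide_eq_true_eq] at hk
    obtain ⟨⟨h2, ha⟩, hbdvd⟩ := hk
    have : k ∣ Nat.gcd a b := Nat.dvd_gcd ha hbdvd
    rw [hcop] at this
    have := Nat.le_of_dvd one_pos this
    omega

def memQ (m : ℕ) : Bool :=
  decide (0 < m.unpair.2) && copB ((m.unpair.1 + 1) / 2) m.unpair.2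

lemma memQ_iff (m : ℕ) :
    memQ m = true ↔ m ∈ Set.range (@Encodable.encode ℚ Rat.instEncodable) := by
  constructor
  · intro h
    simp only [memQ, Bool.and_eq_true, decide_eq_true_eq] at h
    obtain ⟨hd, hc⟩ := h
    rw [copB_iff hd] at hc
    set z := Denumerable.ofNat ℤ m.unpair.1 with hz
    have hze : icode z = m.unpair.1 := Denumerable.encode_ofNat m.unpair.1
    have habs : z.natAbs = (m.unpair.1 + 1) / 2 := by rw [← hze, icode_natAbs]
    refine ⟨⟨z, m.unpair.2, hd.ne', by rwa [habs]⟩, ?_⟩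
    rw [bcode_eq]
    show Nat.pair (icode z) m.unpair.2 = m
    rw [hze, Nat.pair_unpair]
  · rintro ⟨q, rfl⟩
    rw [bcode_eq]
    simp only [memQ, bcode, Nat.unpair_pair, Bool.and_eq_true, decide_eq_true_eq]
    refine ⟨q.pos, ?_⟩
    rw [copB_iff q.pos, icode_natAbs]
    exact q.reduced

def ccount (x : ℕ) : ℕ := (List.range x).countP memQ

lemma fenc_eq (q : ℚ) :
    @Encodable.encode ℚ (Primcodable.ofDenumerable ℚ).toEncodable q = ccount (bcode q) := by
  have h0 : @Encodable.encode ℚ (Primcodable.ofDenumerable ℚ).toEncodable q =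
      (List.range (@Encodable.encode ℚ Rat.instEncodable q)).countP
        (fun m => @decide (m ∈ Set.range (@Encodable.encode ℚ Rat.instEncodable))
          (Encodable.decidableRangeEncode ℚ m)) := rfl
  rw [h0, bcode_eq, ccount]
  congr 1
  funext m
  rcases hb : memQ m with _ | _
  · have := (not_iff_not.2 (memQ_iff m)).1 (by simp [hb])
    simp [this]
  · have := (memQ_iff m).1 hb
    simp [this]

lemma ccount_le_succ (m : ℕ) : ccount m ≤ ccount (m + 1) := by
  simp only [ccount, List.range_succ, List.countP_append]; omega

lemma ccount_mono : Monotone ccount :=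
  monotone_nat_of_le_succ ccount_le_succ

lemma ccount_lt_succ {m : ℕ} (h : memQ m = true) : ccount m < ccount (m + 1) := by
  simp only [ccount, List.range_succ, List.countP_append, List.countP_cons, h]
  simp

lemma ccount_strict {m m' : ℕ} (h : m < m') (hm : memQ m = true) : ccount m < ccount m' :=
  lt_of_lt_of_le (ccount_lt_succ hm) (ccount_mono h)

lemma bcode_natCast (k : ℕ) : bcode (k : ℚ) = Nat.pair (2 * k) 1 := by
  have h1 : ((k : ℚ)).num = (k : ℤ) := Rat.num_natCast k
  have h2 : ((k : ℚ)).den = 1 := Rat.den_natCast k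
  rw [bcode, h1, h2]
  rfl

lemma memQ_bcode (q : ℚ) : memQ (bcode q) = true :=
  (memQ_iff _).2 ⟨q, bcode_eq q⟩

lemma ccount_lower : ∀ n M : ℕ, Nat.pair (2 * n) 1 < M → n + 1 ≤ ccount M := by
  intro n
  induction n with
  | zero =>
      intro M hM
      have h1 : memQ (Nat.pair 0 1) = true := by
        have := memQ_bcode (0 : ℚ)
        rwa [show bcode (0:ℚ) = Nat.pair 0 1 by simpa using bcode_natCast 0] at this
      calc 1 ≤ ccount (Nat.pair 0 1 + 1) := by
              have := ccount_lt_succ h1; omega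
        _ ≤ ccount M := ccount_mono (by simpa using hM)
  | succ n ih =>
      intro M hM
      have hlt : Nat.pair (2 * n) 1 < Nat.pair (2 * (n + 1)) 1 :=
        Nat.pair_lt_pair_left 1 (by omega)
      have h1 : memQ (Nat.pair (2 * (n + 1)) 1) = true := by
        have := memQ_bcode ((n + 1 : ℕ) : ℚ)
        rwa [bcode_natCast (n + 1)] at this
      have h2 : n + 1 ≤ ccount (Nat.pair (2 * (n + 1)) 1) := ih _ hlt
      calc n + 2 ≤ ccount (Nat.pair (2 * (n + 1)) 1 + 1) := by
              have := ccount_lt_succ h1; omega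
        _ ≤ ccount M := ccount_mono (by omega)

lemma ccount_bcode_ofNat (n : ℕ) : ccount (bcode (Denumerable.ofNat ℚ n)) = n := by
  have h := fenc_eq (Denumerable.ofNat ℚ n)
  have h2 : @Encodable.encode ℚ (Primcodable.ofDenumerable ℚ).toEncodable
      (Denumerable.ofNat ℚ n) = n := Denumerable.encode_ofNat n
  omega

def Dfun (n : ℕ) : ℕ :=
  Nat.findGreatest (fun m => memQ m = true ∧ ccount m = n) (Nat.pair (2 * n) 1)

lemma Dfun_eq (n : ℕ) : Dfun n = bcode (Denumerable.ofNat ℚ n) := by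
  set m₀ := bcode (Denumerable.ofNat ℚ n) with hm₀
  have h1 : memQ m₀ = true := memQ_bcode _
  have h2 : ccount m₀ = n := ccount_bcode_ofNat n
  have hb : m₀ ≤ Nat.pair (2 * n) 1 := by
    by_contra hgt
    have := ccount_lower n m₀ (by omega)
    have := ccount_mono (show m₀ ≤ m₀ from le_rfl)
    omega
  have huniq : ∀ m, memQ m = true → ccount m = n → m = m₀ := by
    intro m hm hc
    rcases lt_trichotomy m m₀ with h | h | h
    · have := ccount_strict h hm; omega
    · exact h
    · have := ccount_strict h h1; omega
  have hspec := Nat.findGreatest_spec (P := fun m => memQ m = true ∧ ccount m = n) hb ⟨h1, h2⟩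
  exact huniq _ hspec.1 hspec.2

lemma primrec_memQ : Primrec memQ := by
  have hcop : Primrec₂ copB := by
    have : Primrec₂ fun (p : ℕ × ℕ) (k : ℕ) =>
        decide (2 ≤ k) && decide (k ∣ p.1) && decide (k ∣ p.2) := by
      have d1 : PrimrecRel fun (p : ℕ × ℕ) (k : ℕ) => 2 ≤ k :=
        PrimrecRel.comp Primrec.nat_le (Primrec.const 2) Primrec.snd
      have hdvd : PrimrecRel fun (a b : ℕ) => a ∣ b := by
        have : PrimrecRel fun (a b : ℕ) => b % a = 0 :=
          PrimrecRel.comp Primrec.eq (Primrec.nat_mod.comp Primrec.snd Primrec.fst)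
            (Primrec.const 0)
        exact this.of_eq fun a b => by
          simp [Nat.dvd_iff_mod_eq_zero, eq_comm]
      have d2 : PrimrecRel fun (p : ℕ × ℕ) (k : ℕ) => k ∣ p.1 :=
        PrimrecRel.comp hdvd Primrec.snd (Primrec.fst.comp Primrec.fst)
      have d3 : PrimrecRel fun (p : ℕ × ℕ) (k : ℕ) => k ∣ p.2 :=
        PrimrecRel.comp hdvd Primrec.snd (Primrec.snd.comp Primrec.fst)
      exact Primrec₂.of_eq
        (Primrec.and.comp₂ (Primrec.and.comp₂ d1.decide d2.decide) d3.decide) (fun p k => by simp)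
    have hc : Primrec fun p : ℕ × ℕ =>
        (List.range (p.2 + 1)).countP (fun k =>
          decide (2 ≤ k) && decide (k ∣ p.1) && decide (k ∣ p.2)) :=
      primrec_countP (Primrec.list_range.comp (Primrec.succ.comp Primrec.snd)) this
    exact Primrec₂.mk <| (Primrec.eq.decide.comp hc (Primrec.const 0)).of_eq fun p => by
      rw [copB, Bool.eq_iff_iff]; simp
  have h1 : Primrec fun m : ℕ => m.unpair.2 := Primrec.snd.comp Primrec.unpair
  have h2 : Primrec fun m : ℕ => (m.unpair.1 + 1) / 2 :=
    Primrec.nat_div.comp (Primrec.succ.comp (Primrec.fst.comp Primrec.unpair)) (Primrec.const 2)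
  have hp : Primrec fun m : ℕ => decide (0 < m.unpair.2) :=
    (PrimrecRel.comp Primrec.nat_lt (Primrec.const 0) h1).decide
  exact (Primrec.and.comp hp (hcop.comp h2 h1)).of_eq fun m => rfl

lemma primrec_ccount : Primrec ccount :=
  primrec_countP Primrec.list_range (Primrec₂.of_eq
    (primrec_memQ.comp Primrec.snd).to₂ fun _ _ => rfl)

theorem primrec_bcode : Primrec bcode := by
  rw [Primrec.dom_denumerable]
  have hD : Primrec Dfun := by
    refine Primrec.nat_findGreatest (f := fun n => Nat.pair (2 * n) 1)
      (p := fun n m => memQ m = true ∧ ccount m = n) ?_ ?_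
    · exact Primrec₂.natPair.comp (Primrec.nat_double) (Primrec.const 1)
    · refine PrimrecPred.and ?_ ?_
      · exact PrimrecRel.comp Primrec.eq (primrec_memQ.comp Primrec.snd) (Primrec.const true)
      · exact PrimrecRel.comp Primrec.eq (primrec_ccount.comp Primrec.snd) Primrec.fst
  have := Primrec.nat_iff.1 hD
  exact this.of_eq fun n => by rw [Dfun_eq]; rfl

theorem primrec_den : Primrec Rat.den := by
  have : Primrec fun q : ℚ => (Nat.unpair (bcode q)).2 :=
    Primrec.snd.comp (Primrec.unpair.comp primrec_bcode)
  exact this.of_eq fun q => by simp [bcode]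

theorem primrec_icode_num : Primrec fun q : ℚ => icode q.num := by
  have : Primrec fun q : ℚ => (Nat.unpair (bcode q)).1 :=
    Primrec.fst.comp (Primrec.unpair.comp primrec_bcode)
  exact this.of_eq fun q => by simp [bcode]


open Encodable List

def qtest (q : ℚ) (A B M : ℕ) : Bool := decide (q * 2 ^ M + B < (A : ℚ))

def natform (i d A B M : ℕ) : Bool :=
  if i % 2 = 0 then decide ((i / 2) * 2 ^ M + B * d < A * d)
  else decide (B * d < A * d + ((i + 1) / 2) * 2 ^ M)

lemma icode_ofNat' (n : ℕ) : icode (Int.ofNat n) = 2 * n := rfl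
lemma icode_negSucc' (n : ℕ) : icode (Int.negSucc n) = 2 * n + 1 := rfl

lemma qtest_eq_natform (q : ℚ) (A B M : ℕ) :
    qtest q A B M = natform (icode q.num) q.den A B M := by
  have hd : (0 : ℚ) < (q.den : ℚ) := by exact_mod_cast q.pos
  have hnum : (q.num : ℚ) = q * (q.den : ℚ) := by
    have h := Rat.num_div_den q
    rw [div_eq_iff hd.ne'] at h
    exact h
  have key : (q * 2 ^ M + B < (A : ℚ)) ↔
      (q.num * 2 ^ M + (B : ℤ) * q.den < (A : ℤ) * q.den) := by
    constructor
    · intro h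
      have h2 : ((q.num * 2 ^ M + (B : ℤ) * q.den : ℤ) : ℚ) < ((A * q.den : ℤ) : ℚ) := by
        push_cast
        rw [hnum]
        nlinarith
      exact_mod_cast h2
    · intro h
      have h2 : ((q.num * 2 ^ M + (B : ℤ) * q.den : ℤ) : ℚ) < ((A * q.den : ℤ) : ℚ) := by
        exact_mod_cast h
      push_cast at h2
      rw [hnum] at h2
      nlinarith
  cases hn : q.num with
  | ofNat n =>
      rw [icode_ofNat', natform, if_pos (by omega : 2 * n % 2 = 0),
        show 2 * n / 2 = n by omega]
      rw [hn] at key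
      rw [qtest, decide_eq_decide, key]
      rw [show (Int.ofNat n : ℤ) = (n : ℤ) from rfl]
      constructor
      · intro h; exact_mod_cast h
      · intro h; exact_mod_cast h
  | negSucc n =>
      rw [icode_negSucc', natform, if_neg (by omega : ¬ (2 * n + 1) % 2 = 0),
        show (2 * n + 1 + 1) / 2 = n + 1 by omega]
      rw [hn, Int.negSucc_eq] at key
      rw [qtest, decide_eq_decide, key]
      constructor
      · intro h
        have h2 : (B * q.den : ℤ) < A * q.den + (n + 1) * 2 ^ M := by nlinarith
        exact_mod_cast h2
      · intro h
        have h2 : (B * q.den : ℤ) < A * q.den + (n + 1) * 2 ^ M := by exact_mod_cast h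
        nlinarith

section PR
open Primrec


lemma primrec_pow : Primrec₂ (fun a b : ℕ => a ^ b) :=
  Primrec₂.unpaired'.1 Nat.Primrec.pow


lemma primrec_natform :
    Primrec fun t : (ℕ × ℕ) × (ℕ × ℕ × ℕ) =>
      natform t.1.1 t.1.2 t.2.1 t.2.2.1 t.2.2.2 := by
  have pi : Primrec fun t : (ℕ × ℕ) × (ℕ × ℕ × ℕ) => t.1.1 := fst.comp fst
  have pd : Primrec fun t : (ℕ × ℕ) × (ℕ × ℕ × ℕ) => t.1.2 := snd.comp fst
  have pA : Primrec fun t : (ℕ × ℕ) × (ℕ × ℕ × ℕ) => t.2.1 := fst.comp snd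
  have pB : Primrec fun t : (ℕ × ℕ) × (ℕ × ℕ × ℕ) => t.2.2.1 := fst.comp (snd.comp snd)
  have pM : Primrec fun t : (ℕ × ℕ) × (ℕ × ℕ × ℕ) => t.2.2.2 := snd.comp (snd.comp snd)
  have p2M : Primrec fun t : (ℕ × ℕ) × (ℕ × ℕ × ℕ) => 2 ^ t.2.2.2 :=
    primrec_pow.comp (const 2) pM
  have hc : PrimrecPred fun t : (ℕ × ℕ) × (ℕ × ℕ × ℕ) => t.1.1 % 2 = 0 :=
    PrimrecRel.comp Primrec.eq (nat_mod.comp pi (const 2)) (const 0)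
  have hAd : Primrec fun t : (ℕ × ℕ) × (ℕ × ℕ × ℕ) => t.2.1 * t.1.2 := nat_mul.comp pA pd
  have hBd : Primrec fun t : (ℕ × ℕ) × (ℕ × ℕ × ℕ) => t.2.2.1 * t.1.2 := nat_mul.comp pB pd
  have hb1 : Primrec fun t : (ℕ × ℕ) × (ℕ × ℕ × ℕ) =>
      decide ((t.1.1 / 2) * 2 ^ t.2.2.2 + t.2.2.1 * t.1.2 < t.2.1 * t.1.2) :=
    (PrimrecRel.comp Primrec.nat_lt
      (nat_add.comp (nat_mul.comp (nat_div.comp pi (const 2)) p2M) hBd) hAd).decide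
  have hb2 : Primrec fun t : (ℕ × ℕ) × (ℕ × ℕ × ℕ) =>
      decide (t.2.2.1 * t.1.2 < t.2.1 * t.1.2 + ((t.1.1 + 1) / 2) * 2 ^ t.2.2.2) :=
    (PrimrecRel.comp Primrec.nat_lt hBd
      (nat_add.comp hAd (nat_mul.comp (nat_div.comp (succ.comp pi) (const 2)) p2M))).decide
  exact (Primrec.ite hc hb1 hb2).of_eq fun t => by simp [natform]

lemma primrec_qtest :
    Primrec fun t : ℚ × (ℕ × ℕ × ℕ) => qtest t.1 t.2.1 t.2.2.1 t.2.2.2 := by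
  have h : Primrec fun t : ℚ × (ℕ × ℕ × ℕ) =>
      natform (icode t.1.num) t.1.den t.2.1 t.2.2.1 t.2.2.2 :=
    primrec_natform.comp
      ((((primrec_icode_num.comp fst)).pair (primrec_den.comp fst)).pair snd)
  exact h.of_eq fun t => (qtest_eq_natform _ _ _ _).symm

end PR

open List

def pfxB (x y : List Bool) : Bool :=
  ((List.range x.length).countP fun i => x[i]? == y[i]?) == x.length

lemma pfxB_iff {x y : List Bool} : pfxB x y = true ↔ x <+: y := by
  have hc := @List.countP_eq_length _ (List.range x.length) (fun i => x[i]? == y[i]?)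
  rw [List.length_range] at hc
  rw [pfxB, beq_iff_eq, hc]
  constructor
  · intro h
    have hget : ∀ i, i < x.length → x[i]? = y[i]? := by
      intro i hi
      have := h i (List.mem_range.2 hi)
      rwa [beq_iff_eq] at this
    have hle : x.length ≤ y.length := by
      by_contra hgt
      push_neg at hgt
      have h1 := hget y.length hgt
      rw [List.getElem?_eq_none (le_refl y.length)] at h1
      rw [List.getElem?_eq_getElem hgt] at h1
      exact Option.some_ne_none _ h1
    rw [List.prefix_iff_eq_take]
    apply List.ext_get (by simp [hle]) fun n h1 h2 => ?_
    have h3 := hget n h1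
    have hny : n < y.length := lt_of_lt_of_le h1 hle
    rw [List.getElem?_eq_getElem h1, List.getElem?_eq_getElem hny] at h3
    simp only [List.get_eq_getElem, List.getElem_take]
    exact Option.some_injective _ h3
  · rintro ⟨t, rfl⟩
    intro i hi
    rw [List.mem_range] at hi
    rw [beq_iff_eq, List.getElem?_append_left (by omega)]

lemma pfxB_nil (y : List Bool) : pfxB [] y = true := pfxB_iff.2 (List.nil_prefix)

/-! ### restrictions and cylinders -/

def restr (L : ℕ) (α : ℕ → Bool) : List Bool := List.ofFn (fun i : Fin L => α i.val)

@[simp] lemma length_restr (L : ℕ) (α : ℕ → Bool) : (restr L α).length = L := by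
  simp [restr]

lemma mem_cylinder_iff {x : List Bool} {α : ℕ → Bool} :
    α ∈ cylinder x ↔ restr x.length α = x := by
  constructor
  · intro h
    apply List.ext_get (by simp) fun n h1 h2 => ?_
    simp only [restr, List.get_eq_getElem, List.getElem_ofFn]
    exact h ⟨n, h2⟩
  · intro h i
    have h1 : x[(i : ℕ)]? = (restr x.length α)[(i : ℕ)]? := by rw [h]
    have h2 : (restr x.length α)[(i : ℕ)]? = some (α i.val) := by
      rw [List.getElem?_eq_getElem (by simp [i.isLt])]
      simp [restr]
    have h3 : x[(i : ℕ)]? = some (x.get i) := by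
      rw [List.getElem?_eq_getElem i.isLt]; simp
    rw [h1, h2] at h3
    exact Option.some_injective _ h3

lemma cylinder_anti {x y : List Bool} (h : x <+: y) : cylinder y ⊆ cylinder x := by
  intro α hα
  intro i
  obtain ⟨t, rfl⟩ := h
  have hi : i.val < (x ++ t).length := by
    have := i.isLt; simp only [List.length_append]; omega
  have := hα ⟨i.val, hi⟩
  simp only [List.get_eq_getElem] at this ⊢
  rw [this, List.getElem_append_left i.isLt]

lemma restr_take {k L : ℕ} (h : k ≤ L) (α : ℕ → Bool) :
    (restr L α).take k = restr k α := by
  apply List.ext_get (by simp [h]) fun n h1 h2 => ?_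
  simp only [List.get_eq_getElem, List.getElem_take, restr, List.getElem_ofFn]

lemma restr_prefix {k L : ℕ} (h : k ≤ L) (α : ℕ → Bool) : restr k α <+: restr L α := by
  rw [List.prefix_iff_eq_take, length_restr, restr_take h]

lemma restr_succ (L : ℕ) (α : ℕ → Bool) : restr (L + 1) α = restr L α ++ [α L] := by
  apply List.ext_get (by simp) fun n h1 h2 => ?_
  simp only [restr, List.get_eq_getElem, List.getElem_ofFn]
  rcases Nat.lt_or_ge n L with h | h
  · rw [List.getElem_append_left (by simpa using h)]
    simp [restr]
  · have hn : n = L := by simp at h1; omega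
    subst hn
    rw [List.getElem_append_right (by simp)]
    simp [restr]

lemma mem_cylinder_restr (L : ℕ) (α : ℕ → Bool) : α ∈ cylinder (restr L α) := by
  rw [mem_cylinder_iff]
  congr 1
  simp

lemma cylinder_nil : _root_.cylinder ([] : List Bool) = Set.univ := by
  ext α
  simp only [Set.mem_univ, iff_true]
  intro i
  exact absurd i.isLt (by simp)

lemma cylinder_disjoint {x y : List Bool} (hlen : x.length = y.length) (hne : x ≠ y) :
    Disjoint (cylinder x) (cylinder y) := by
  rw [Set.disjoint_left]
  intro α hx hy
  rw [mem_cylinder_iff] at hx hy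
  exact hne (hx ▸ hy ▸ (by rw [hlen]))

lemma measurable_cylinder (x : List Bool) : MeasurableSet (cylinder x) := by
  have : cylinder x = ⋂ i : Fin x.length, (fun α : ℕ → Bool => α i.val) ⁻¹' {x.get i} := by
    ext α; simp [_root_.cylinder, Set.mem_iInter, List.get_eq_getElem]
  rw [this]
  exact MeasurableSet.iInter fun i =>
    (measurable_pi_apply i.val) (measurableSet_singleton _)

lemma measurable_openOf (T : Set (List Bool)) : MeasurableSet (openOf T) :=
  MeasurableSet.biUnion (Set.to_countable T) fun x _ => measurable_cylinder x

lemma cylinder_split (σ : List Bool) :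
    cylinder σ = cylinder (σ ++ [false]) ∪ cylinder (σ ++ [true]) := by
  ext α
  constructor
  · intro h
    rw [mem_cylinder_iff] at h
    have hmem : α ∈ cylinder (σ ++ [α σ.length]) := by
      rw [mem_cylinder_iff]
      have : (σ ++ [α σ.length]).length = σ.length + 1 := by simp
      rw [this, restr_succ, h]
    rcases hb : α σ.length with _ | _
    · left; rwa [hb] at hmem
    · right; rwa [hb] at hmem
  · intro h
    rcases h with h | h
    · exact cylinder_anti (List.prefix_append σ [false]) h
    · exact cylinder_anti (List.prefix_append σ [true]) h

/-! ### the list of all strings of length L -/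

def allB : ℕ → List (List Bool) :=
  fun L => Nat.rec [[]] (fun _ ih => ih.flatMap fun t => [t ++ [false], t ++ [true]]) L

lemma allB_succ (L : ℕ) :
    allB (L + 1) = (allB L).flatMap fun t => [t ++ [false], t ++ [true]] := rfl

lemma mem_allB {L : ℕ} {τ : List Bool} : τ ∈ allB L ↔ τ.length = L := by
  induction L generalizing τ with
  | zero =>
      simp only [allB]
      constructor
      · intro h; simp at h; simp [h]
      · intro h; simp [List.length_eq_zero_iff.1 h]
  | succ L ih =>
      rw [allB_succ, List.mem_flatMap]
      constructor
      · rintro ⟨t, ht, hτ⟩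
        have := ih.1 ht
        simp only [List.mem_cons, List.mem_singleton] at hτ
        rcases hτ with rfl | hτ
        · simp [this]
        · simp at hτ; subst hτ; simp [this]
      · intro h
        have hne : τ ≠ [] := by intro hc; subst hc; simp at h
        refine ⟨τ.dropLast, ih.2 (by simp [List.length_dropLast, h]), ?_⟩
        have := List.dropLast_append_getLast hne
        rcases hb : τ.getLast hne with _ | _
        · rw [hb] at this
          simp only [List.mem_cons, List.mem_singleton]
          left; exact this.symm
        · rw [hb] at this
          simp only [List.mem_cons, List.mem_singleton]
          right; left; exact this.symm

lemma nodup_allB (L : ℕ) : (allB L).Nodup := by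
  induction L with
  | zero => simp [allB]
  | succ L ih =>
      rw [allB_succ, List.nodup_flatMap]
      constructor
      · intro x _
        simp only [List.nodup_cons, List.mem_singleton, List.nodup_singleton, and_true,
          List.not_mem_nil, not_false_iff, List.mem_cons]
        refine ⟨?_, trivial, List.nodup_nil⟩
        intro h
        rcases h with h | h
        · have h2 := List.append_cancel_left h
          simp at h2
        · exact h
      · refine List.Pairwise.imp ?_ ih
        intro a b hne
        intro c hca hcb
        simp only [List.mem_cons, List.mem_singleton, List.not_mem_nil, or_false] at hca hcb
        have hab : a = b := by
          rcases hca with rfl | rfl <;> rcases hcb with h | h <;>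
          · have := congrArg List.dropLast h
            simpa using this
        exact hne hab

/-! ### measure computations -/

variable {μ : Measure (ℕ → Bool)}

lemma measure_biUnion_cyl
    (hμ : ∀ x : List Bool, μ (_root_.cylinder x) = (1 / 2 : ENNReal) ^ x.length) (L : ℕ) :
    ∀ l : List (List Bool), l.Nodup → (∀ τ ∈ l, τ.length = L) →
      μ (⋃ τ ∈ l, _root_.cylinder τ) = l.length * (1 / 2 : ENNReal) ^ L := by
  intro l
  induction l with
  | nil => intro _ _; simp
  | cons a l ih =>
      intro hnd hlen
      have hd : Disjoint (_root_.cylinder a) (⋃ τ ∈ l, _root_.cylinder τ) := by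
        rw [Set.disjoint_left]
        intro α ha hl
        simp only [Set.mem_iUnion] at hl
        obtain ⟨τ, hτ, hατ⟩ := hl
        have hne : a ≠ τ := by
          intro hc; subst hc; exact (List.nodup_cons.1 hnd).1 hτ
        exact Set.disjoint_left.1
          (cylinder_disjoint (by rw [hlen a (by simp), hlen τ (by simp [hτ])]) hne) ha hατ
      have hm : MeasurableSet (⋃ τ ∈ l, _root_.cylinder τ) :=
        MeasurableSet.biUnion (Set.to_countable _) fun τ _ => measurable_cylinder τ
      have hU : (⋃ τ ∈ a :: l, _root_.cylinder τ) =
          _root_.cylinder a ∪ ⋃ τ ∈ l, _root_.cylinder τ := by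
        ext α
        simp only [Set.mem_iUnion, Set.mem_union, List.mem_cons]
        constructor
        · rintro ⟨τ, (rfl | hτ), hα⟩
          · exact Or.inl hα
          · exact Or.inr ⟨τ, hτ, hα⟩
        · rintro (hα | ⟨τ, hτ, hα⟩)
          · exact ⟨a, Or.inl rfl, hα⟩
          · exact ⟨τ, Or.inr hτ, hα⟩
      rw [hU, measure_union hd hm, hμ a, hlen a (by simp),
        ih (List.nodup_cons.1 hnd).2 (fun τ hτ => hlen τ (by simp [hτ]))]
      simp only [List.length_cons]
      push_cast
      ring

def inF (F : List (List Bool)) (τ : List Bool) : Bool :=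
  decide (0 < F.countP fun x => pfxB x τ)

lemma inF_iff {F : List (List Bool)} {τ : List Bool} :
    inF F τ = true ↔ ∃ x ∈ F, x <+: τ := by
  rw [inF, decide_eq_true_eq, Nat.pos_iff_ne_zero, Ne, List.countP_eq_zero]
  push_neg
  constructor
  · rintro ⟨x, hx, hp⟩
    exact ⟨x, hx, pfxB_iff.1 (by simpa using hp)⟩
  · rintro ⟨x, hx, hp⟩
    exact ⟨x, hx, by simpa using pfxB_iff.2 hp⟩

def cnt (F : List (List Bool)) (σ : List Bool) (L : ℕ) : ℕ :=
  (allB L).countP fun τ => inF F τ && pfxB σ τ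

def setF (F : List (List Bool)) : Set (List Bool) := {x | x ∈ F}

lemma mem_openOf {T : Set (List Bool)} {α : ℕ → Bool} :
    α ∈ openOf T ↔ ∃ x ∈ T, α ∈ _root_.cylinder x := by
  simp [openOf]

lemma openOf_inter_cyl (F : List (List Bool)) (σ : List Bool) (L : ℕ)
    (hσ : σ.length ≤ L) (hF : ∀ x ∈ F, x.length ≤ L) :
    openOf (setF F) ∩ _root_.cylinder σ =
      ⋃ τ ∈ (allB L).filter (fun τ => inF F τ && pfxB σ τ), _root_.cylinder τ := by
  ext α
  simp only [Set.mem_inter_iff, Set.mem_iUnion, List.mem_filter, exists_prop]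
  constructor
  · rintro ⟨hαF, hασ⟩
    obtain ⟨x, hx, hαx⟩ := mem_openOf.1 hαF
    refine ⟨restr L α, ⟨mem_allB.2 (by simp), ?_⟩, mem_cylinder_restr L α⟩
    rw [Bool.and_eq_true]
    constructor
    · refine inF_iff.2 ⟨x, hx, ?_⟩
      rw [mem_cylinder_iff] at hαx
      have := restr_prefix (hF x hx) α
      rwa [hαx] at this
    · refine pfxB_iff.2 ?_
      rw [mem_cylinder_iff] at hασ
      have := restr_prefix hσ α
      rwa [hασ] at this
  · rintro ⟨τ, ⟨hτL, hcond⟩, hατ⟩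
    rw [Bool.and_eq_true] at hcond
    obtain ⟨x, hx, hxτ⟩ := inF_iff.1 hcond.1
    refine ⟨mem_openOf.2 ⟨x, hx, cylinder_anti hxτ hατ⟩, cylinder_anti (pfxB_iff.1 hcond.2) hατ⟩

lemma measure_openOf_inter
    (hμ : ∀ x : List Bool, μ (_root_.cylinder x) = (1 / 2 : ENNReal) ^ x.length)
    (F : List (List Bool)) (σ : List Bool) (L : ℕ)
    (hσ : σ.length ≤ L) (hF : ∀ x ∈ F, x.length ≤ L) :
    μ (openOf (setF F) ∩ _root_.cylinder σ) = (cnt F σ L) * (1 / 2 : ENNReal) ^ L := by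
  rw [openOf_inter_cyl F σ L hσ hF,
    measure_biUnion_cyl hμ L _ ((nodup_allB L).filter _)
      (fun τ hτ => mem_allB.1 (List.mem_of_mem_filter hτ)),
    cnt, List.countP_eq_length_filter]

lemma measure_openOf_fin
    (hμ : ∀ x : List Bool, μ (_root_.cylinder x) = (1 / 2 : ENNReal) ^ x.length)
    (F : List (List Bool)) (L : ℕ) (hF : ∀ x ∈ F, x.length ≤ L) :
    μ (openOf (setF F)) = (cnt F [] L) * (1 / 2 : ENNReal) ^ L := by
  have := measure_openOf_inter hμ F [] L (by simp) hF
  rwa [cylinder_nil, Set.inter_univ] at this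

lemma qtest_real_iff {q : ℚ} {c L h k M : ℕ} (hL : L ≤ M) (hh : h + 1 ≤ M) (hk : k ≤ M) :
    qtest q (c * 2 ^ (M - L) + 2 ^ (M - (h + 1))) (2 ^ (M - k)) M = true ↔
      (q : ℝ) + (2 : ℝ)⁻¹ ^ k < (c : ℝ) * (2 : ℝ)⁻¹ ^ L + (2 : ℝ)⁻¹ ^ (h + 1) := by
  rw [qtest, decide_eq_true_eq]
  have hcast : (q * 2 ^ M + (2 ^ (M - k) : ℕ) < ((c * 2 ^ (M - L) + 2 ^ (M - (h + 1)) : ℕ) : ℚ)) ↔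
      ((q : ℝ) * 2 ^ M + 2 ^ (M - k) < (c : ℝ) * 2 ^ (M - L) + 2 ^ (M - (h + 1))) := by
    constructor
    · intro hx
      have : ((q * 2 ^ M + (2 ^ (M - k) : ℕ) : ℚ) : ℝ) <
          (((c * 2 ^ (M - L) + 2 ^ (M - (h + 1)) : ℕ) : ℚ) : ℝ) := by exact_mod_cast hx
      push_cast at this
      convert this using 2 <;> push_cast <;> ring
    · intro hx
      have : ((q * 2 ^ M + (2 ^ (M - k) : ℕ) : ℚ) : ℝ) <
          (((c * 2 ^ (M - L) + 2 ^ (M - (h + 1)) : ℕ) : ℚ) : ℝ) := by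
        push_cast
        convert hx using 2 <;> push_cast <;> ring
      exact_mod_cast this
  rw [hcast]
  have e1 : (2 : ℝ) ^ (M - k) = 2 ^ M * (2 : ℝ)⁻¹ ^ k := by
    rw [pow_sub₀ (2:ℝ) two_ne_zero hk, inv_pow]
  have e2 : (2 : ℝ) ^ (M - L) = 2 ^ M * (2 : ℝ)⁻¹ ^ L := by
    rw [pow_sub₀ (2:ℝ) two_ne_zero hL, inv_pow]
  have e3 : (2 : ℝ) ^ (M - (h + 1)) = 2 ^ M * (2 : ℝ)⁻¹ ^ (h + 1) := by
    rw [pow_sub₀ (2:ℝ) two_ne_zero hh, inv_pow]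
  rw [e1, e2, e3]
  have hpos : (0 : ℝ) < 2 ^ M := by positivity
  constructor
  · intro hx; nlinarith
  · intro hx; nlinarith


/-! ### enumeration stages -/

def ELst (e : ℕ → Option (List Bool)) : ℕ → List (List Bool) :=
  fun m => Nat.rec [] (fun y ih => ih ++ (e y).toList) m

lemma ELst_succ (e : ℕ → Option (List Bool)) (m : ℕ) :
    ELst e (m + 1) = ELst e m ++ (e m).toList := rfl

lemma mem_ELst {e : ℕ → Option (List Bool)} {m : ℕ} {x : List Bool} :
    x ∈ ELst e m ↔ ∃ n < m, e n = some x := by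
  induction m with
  | zero => simp [ELst]
  | succ m ih =>
      rw [ELst_succ, List.mem_append, ih]
      constructor
      · rintro (⟨n, hn, he⟩ | hx)
        · exact ⟨n, by omega, he⟩
        · refine ⟨m, by omega, ?_⟩
          rcases hem : e m with _ | y
          · rw [hem] at hx; simp at hx
          · rw [hem] at hx; simp at hx; rw [hx]
      · rintro ⟨n, hn, he⟩
        rcases Nat.lt_or_ge n m with h | h
        · exact Or.inl ⟨n, h, he⟩
        · have : n = m := by omega
          subst this
          right; simp [he]

lemma ELst_subset {e : ℕ → Option (List Bool)} {m m' : ℕ} (h : m ≤ m') :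
    ∀ x, x ∈ ELst e m → x ∈ ELst e m' := by
  intro x hx
  obtain ⟨n, hn, he⟩ := mem_ELst.1 hx
  exact mem_ELst.2 ⟨n, by omega, he⟩

def maxLen (l : List (List Bool)) : ℕ := l.foldr (fun x acc => max x.length acc) 0

lemma le_maxLen {l : List (List Bool)} : ∀ x ∈ l, x.length ≤ maxLen l := by
  induction l with
  | nil => simp
  | cons a l ih =>
      intro x hx
      rcases List.mem_cons.1 hx with rfl | hx
      · simp [maxLen]
      · have := ih x hx
        simp only [maxLen, List.foldr_cons] at *
        omega

/-! ### the search condition -/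

def Lof (F : List (List Bool)) (τ : List Bool) : ℕ := max (maxLen F) τ.length

def condAB (F : List (List Bool)) (τ : List Bool) (h k : ℕ) : ℕ × ℕ × ℕ :=
  let L := Lof F τ
  let M := L + k + h + 1
  ((cnt F [] L - cnt F τ L) * 2 ^ (M - L) + 2 ^ (M - (h + 1)), 2 ^ (M - k), M)

def Cond (g : ℕ → ℚ) (e : ℕ → Option (List Bool)) (σ : List Bool) (n : ℕ) : Bool :=
  let τ := σ ++ [n.unpair.1.bodd]
  let F := ELst e n.unpair.2.unpair.1
  let p := condAB F τ σ.length n.unpair.2.unpair.2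
  qtest (g n.unpair.2.unpair.2) p.1 p.2.1 p.2.2

lemma cnt_le (F : List (List Bool)) (τ : List Bool) (L : ℕ) : cnt F τ L ≤ cnt F [] L := by
  apply List.countP_mono_left
  intro x _ hx
  rw [Bool.and_eq_true] at hx ⊢
  exact ⟨hx.1, pfxB_nil x⟩

lemma cond_iff_real (g : ℕ → ℚ) (e : ℕ → Option (List Bool)) (σ : List Bool) (n : ℕ) :
    Cond g e σ n = true ↔
      ((g n.unpair.2.unpair.2 : ℝ) + (2 : ℝ)⁻¹ ^ n.unpair.2.unpair.2 <
        ((cnt (ELst e n.unpair.2.unpair.1) [] (Lof (ELst e n.unpair.2.unpair.1) (σ ++ [n.unpair.1.bodd]))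
          - cnt (ELst e n.unpair.2.unpair.1) (σ ++ [n.unpair.1.bodd])
            (Lof (ELst e n.unpair.2.unpair.1) (σ ++ [n.unpair.1.bodd])) : ℕ) : ℝ) *
          (2 : ℝ)⁻¹ ^ (Lof (ELst e n.unpair.2.unpair.1) (σ ++ [n.unpair.1.bodd])) +
          (2 : ℝ)⁻¹ ^ (σ.length + 1)) := by
  set F := ELst e n.unpair.2.unpair.1
  set τ := σ ++ [n.unpair.1.bodd]
  set k := n.unpair.2.unpair.2
  set L := Lof F τ
  set M := L + k + σ.length + 1
  have hτL : τ.length = σ.length + 1 := by simp [τ]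
  have hσL : σ.length + 1 ≤ L := by
    rw [← hτL]; exact le_max_right _ _
  have hC : Cond g e σ n = qtest (g k)
      ((cnt F [] L - cnt F τ L) * 2 ^ (M - L) + 2 ^ (M - (σ.length + 1)))
      (2 ^ (M - k)) M := by
    simp only [Cond, condAB, F, τ, k, L, M]
  rw [hC]
  exact qtest_real_iff (by omega) (by omega) (by omega)

/-! ### real-valued measure helpers -/

lemma ennval (c L : ℕ) : ((c : ENNReal) * (1 / 2 : ENNReal) ^ L).toReal
    = (c : ℝ) * (2 : ℝ)⁻¹ ^ L := by
  rw [ENNReal.toReal_mul, ENNReal.toReal_pow]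
  norm_num

variable {μ : Measure (ℕ → Bool)}

lemma rmeas_inter_diff [IsProbabilityMeasure μ] (X C : Set (ℕ → Bool)) (hC : MeasurableSet C) :
    (μ (X ∩ C)).toReal + (μ (X \ C)).toReal = (μ X).toReal := by
  rw [← ENNReal.toReal_add (measure_ne_top μ _) (measure_ne_top μ _),
    measure_inter_add_diff X hC]

lemma rmeas_mono [IsProbabilityMeasure μ] {X Y : Set (ℕ → Bool)} (h : X ⊆ Y) :
    (μ X).toReal ≤ (μ Y).toReal :=
  (ENNReal.toReal_le_toReal (measure_ne_top μ _) (measure_ne_top μ _)).2 (measure_mono h)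

lemma rmeas_fin_inter [IsProbabilityMeasure μ]
    (hμ : ∀ x : List Bool, μ (_root_.cylinder x) = (1 / 2 : ENNReal) ^ x.length)
    (F : List (List Bool)) (τ : List Bool) (L : ℕ)
    (hτ : τ.length ≤ L) (hF : ∀ x ∈ F, x.length ≤ L) :
    (μ (openOf (setF F) ∩ _root_.cylinder τ)).toReal = (cnt F τ L : ℝ) * (2 : ℝ)⁻¹ ^ L := by
  rw [measure_openOf_inter hμ F τ L hτ hF, ennval]

lemma rmeas_fin_diff [IsProbabilityMeasure μ]
    (hμ : ∀ x : List Bool, μ (_root_.cylinder x) = (1 / 2 : ENNReal) ^ x.length)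
    (F : List (List Bool)) (τ : List Bool) (L : ℕ)
    (hτ : τ.length ≤ L) (hF : ∀ x ∈ F, x.length ≤ L) :
    (μ (openOf (setF F) \ _root_.cylinder τ)).toReal
      = ((cnt F [] L - cnt F τ L : ℕ) : ℝ) * (2 : ℝ)⁻¹ ^ L := by
  have h1 := rmeas_inter_diff (μ := μ) (openOf (setF F)) (_root_.cylinder τ)
    (measurable_cylinder τ)
  have h2 : (μ (openOf (setF F))).toReal = (cnt F [] L : ℝ) * (2 : ℝ)⁻¹ ^ L := by
    rw [measure_openOf_fin hμ F L hF, ennval]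
  have h3 := rmeas_fin_inter (μ := μ) hμ F τ L hτ hF
  rw [Nat.cast_sub (cnt_le F τ L), sub_mul]
  linarith

lemma hF_le_Lof (F : List (List Bool)) (τ : List Bool) : ∀ x ∈ F, x.length ≤ Lof F τ :=
  fun x hx => le_trans (le_maxLen x hx) (le_max_left _ _)

lemma hτ_le_Lof (F : List (List Bool)) (τ : List Bool) : τ.length ≤ Lof F τ :=
  le_max_right _ _

/-! ### soundness -/

lemma sound [IsProbabilityMeasure μ]
    (hμ : ∀ x : List Bool, μ (_root_.cylinder x) = (1 / 2 : ENNReal) ^ x.length)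
    {S : Set (List Bool)} {e : ℕ → Option (List Bool)} {g : ℕ → ℚ}
    (hSe : S = {x | ∃ n, e n = some x})
    (hg : ∀ k : ℕ, |(μ (openOf S)).toReal - (g k : ℝ)| < (2 : ℝ)⁻¹ ^ k)
    (σ : List Bool) (n : ℕ) (hc : Cond g e σ n = true) :
    (μ (openOf S ∩ _root_.cylinder (σ ++ [n.unpair.1.bodd]))).toReal
      < (2 : ℝ)⁻¹ ^ (σ.length + 1) := by
  set τ := σ ++ [n.unpair.1.bodd] with hτ
  set k := n.unpair.2.unpair.2 with hk
  set F := ELst e n.unpair.2.unpair.1 with hF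
  set L := Lof F τ with hL
  have hreal := (cond_iff_real g e σ n).1 hc
  rw [← hτ, ← hk, ← hF, ← hL] at hreal
  have hFsub : openOf (setF F) ⊆ openOf S := by
    apply Set.iUnion₂_mono'
    intro x hx
    refine ⟨x, ?_, subset_rfl⟩
    obtain ⟨nn, _, he⟩ := mem_ELst.1 hx
    rw [hSe]; exact ⟨nn, he⟩
  have hdiffval := rmeas_fin_diff (μ := μ) hμ F τ L (hτ_le_Lof F τ) (hF_le_Lof F τ)
  have hmono2 : (μ (openOf (setF F) \ _root_.cylinder τ)).toReal
      ≤ (μ (openOf S \ _root_.cylinder τ)).toReal :=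
    rmeas_mono (Set.diff_subset_diff_left hFsub)
  have hsplit := rmeas_inter_diff (μ := μ) (openOf S) (_root_.cylinder τ)
    (measurable_cylinder τ)
  have habs := abs_sub_lt_iff.1 (hg k)
  linarith [habs.1, habs.2]

/-! ### completeness -/

lemma complete [IsProbabilityMeasure μ]
    (hμ : ∀ x : List Bool, μ (_root_.cylinder x) = (1 / 2 : ENNReal) ^ x.length)
    {S : Set (List Bool)} {e : ℕ → Option (List Bool)} {g : ℕ → ℚ}
    (hSe : S = {x | ∃ n, e n = some x})
    (hg : ∀ k : ℕ, |(μ (openOf S)).toReal - (g k : ℝ)| < (2 : ℝ)⁻¹ ^ k)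
    (σ : List Bool)
    (hinv : (μ (openOf S ∩ _root_.cylinder σ)).toReal < (2 : ℝ)⁻¹ ^ σ.length) :
    ∃ n, Cond g e σ n = true := by
  classical
  -- split the cylinder
  have hms : ∀ τ : List Bool, MeasurableSet (openOf S ∩ _root_.cylinder τ) :=
    fun τ => (measurable_openOf S).inter (measurable_cylinder τ)
  have hsplitset : openOf S ∩ _root_.cylinder σ =
      (openOf S ∩ _root_.cylinder (σ ++ [false])) ∪ (openOf S ∩ _root_.cylinder (σ ++ [true])) := by
    rw [cylinder_split σ, Set.inter_union_distrib_left]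
  have hdisj : Disjoint (openOf S ∩ _root_.cylinder (σ ++ [false]))
      (openOf S ∩ _root_.cylinder (σ ++ [true])) := by
    refine Disjoint.mono Set.inter_subset_right Set.inter_subset_right ?_
    apply cylinder_disjoint (by simp)
    intro hcon
    have := List.append_cancel_left hcon
    simp at this
  have hsum : (μ (openOf S ∩ _root_.cylinder (σ ++ [false]))).toReal
      + (μ (openOf S ∩ _root_.cylinder (σ ++ [true]))).toReal
      = (μ (openOf S ∩ _root_.cylinder σ)).toReal := by
    rw [← ENNReal.toReal_add (measure_ne_top μ _) (measure_ne_top μ _),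
      ← measure_union hdisj (hms _), ← hsplitset]
  -- pick the good branch
  have hpow : (2 : ℝ)⁻¹ ^ σ.length = (2 : ℝ)⁻¹ ^ (σ.length + 1) + (2 : ℝ)⁻¹ ^ (σ.length + 1) := by
    rw [pow_succ]; ring
  obtain ⟨b, hb⟩ : ∃ b : Bool, (μ (openOf S ∩ _root_.cylinder (σ ++ [b]))).toReal
      < (2 : ℝ)⁻¹ ^ (σ.length + 1) := by
    by_contra hno
    push_neg at hno
    have h1 := hno false
    have h2 := hno true
    linarith
  set τ := σ ++ [b] with hτdef
  set aτ := (μ (openOf S ∩ _root_.cylinder τ)).toReal with haτ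
  set ε := ((2 : ℝ)⁻¹ ^ (σ.length + 1) - aτ) / 4 with hε
  have hεpos : 0 < ε := by
    rw [hε]; linarith
  obtain ⟨k, hkε⟩ := exists_pow_lt_of_lt_one hεpos (by norm_num : (2 : ℝ)⁻¹ < 1)
  -- convergence of the finite stages
  have hmono : Monotone fun m => openOf (setF (ELst e m)) := by
    intro m m' hmm
    apply Set.iUnion₂_mono'
    intro x hx
    exact ⟨x, ELst_subset hmm x hx, subset_rfl⟩
  have hunion : (⋃ m, openOf (setF (ELst e m))) = openOf S := by
    ext α
    simp only [Set.mem_iUnion]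
    constructor
    · rintro ⟨m, hm⟩
      obtain ⟨x, hx, hαx⟩ := mem_openOf.1 hm
      refine mem_openOf.2 ⟨x, ?_, hαx⟩
      obtain ⟨nn, _, he⟩ := mem_ELst.1 hx
      rw [hSe]; exact ⟨nn, he⟩
    · intro hm
      obtain ⟨x, hx, hαx⟩ := mem_openOf.1 hm
      rw [hSe] at hx
      obtain ⟨nn, he⟩ := hx
      exact ⟨nn + 1, mem_openOf.2 ⟨x, mem_ELst.2 ⟨nn, by omega, he⟩, hαx⟩⟩
  have htend := tendsto_measure_iUnion_atTop (μ := μ) hmono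
  rw [hunion] at htend
  have htendR : Filter.Tendsto (fun m => (μ (openOf (setF (ELst e m)))).toReal)
      Filter.atTop (nhds (μ (openOf S)).toReal) :=
    (ENNReal.tendsto_toReal (measure_ne_top μ _)).comp htend
  obtain ⟨N, hN⟩ := Metric.tendsto_atTop.1 htendR ε hεpos
  have hNd := hN N le_rfl
  rw [Real.dist_eq] at hNd
  -- assemble
  set F := ELst e N with hFdef
  set L := Lof F τ with hLdef
  have hFsub : openOf (setF F) ⊆ openOf S := by
    apply Set.iUnion₂_mono'
    intro x hx
    refine ⟨x, ?_, subset_rfl⟩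
    obtain ⟨nn, _, he⟩ := mem_ELst.1 hx
    rw [hSe]; exact ⟨nn, he⟩
  have hdiffval := rmeas_fin_diff (μ := μ) hμ F τ L (hτ_le_Lof F τ) (hF_le_Lof F τ)
  have hSdiffF : (μ (openOf S \ openOf (setF F))).toReal
      = (μ (openOf S)).toReal - (μ (openOf (setF F))).toReal := by
    rw [measure_diff hFsub (measurable_openOf _).nullMeasurableSet (measure_ne_top μ _),
      ENNReal.toReal_sub_of_le (measure_mono hFsub) (measure_ne_top μ _)]
  have hcover : openOf S \ _root_.cylinder τ ⊆
      (openOf (setF F) \ _root_.cylinder τ) ∪ (openOf S \ openOf (setF F)) := by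
    intro α hα
    by_cases hαF : α ∈ openOf (setF F)
    · exact Or.inl ⟨hαF, hα.2⟩
    · exact Or.inr ⟨hα.1, hαF⟩
  have hbound : (μ (openOf S \ _root_.cylinder τ)).toReal
      ≤ (μ (openOf (setF F) \ _root_.cylinder τ)).toReal
        + (μ (openOf S \ openOf (setF F))).toReal := by
    have h1 := measure_union_le (μ := μ) (openOf (setF F) \ _root_.cylinder τ)
      (openOf S \ openOf (setF F))
    have h2 := measure_mono (μ := μ) hcover
    have h3 : (μ (openOf S \ _root_.cylinder τ)).toReal
        ≤ (μ ((openOf (setF F) \ _root_.cylinder τ) ∪ (openOf S \ openOf (setF F)))).toReal :=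
      rmeas_mono hcover
    calc (μ (openOf S \ _root_.cylinder τ)).toReal
        ≤ (μ ((openOf (setF F) \ _root_.cylinder τ) ∪ (openOf S \ openOf (setF F)))).toReal := h3
      _ ≤ ((μ (openOf (setF F) \ _root_.cylinder τ))
            + (μ (openOf S \ openOf (setF F)))).toReal := by
          exact (ENNReal.toReal_le_toReal (measure_ne_top μ _)
            (by simp [ENNReal.add_ne_top, measure_ne_top μ _])).2 h1
      _ = (μ (openOf (setF F) \ _root_.cylinder τ)).toReal
            + (μ (openOf S \ openOf (setF F))).toReal :=
          ENNReal.toReal_add (measure_ne_top μ _) (measure_ne_top μ _)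
  have hsplitτ := rmeas_inter_diff (μ := μ) (openOf S) (_root_.cylinder τ)
    (measurable_cylinder τ)
  have habs := abs_sub_lt_iff.1 (hg k)
  have hmF : (μ (openOf (setF F))).toReal ≤ (μ (openOf S)).toReal := rmeas_mono hFsub
  -- the required real inequality
  have hineq : (g k : ℝ) + (2 : ℝ)⁻¹ ^ k <
      ((cnt F [] L - cnt F τ L : ℕ) : ℝ) * (2 : ℝ)⁻¹ ^ L + (2 : ℝ)⁻¹ ^ (σ.length + 1) := by
    have h5 : |(μ (openOf (setF F))).toReal - (μ (openOf S)).toReal| < ε := hNd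
    have h6 := abs_sub_lt_iff.1 h5
    linarith [habs.1, habs.2, h6.1, h6.2]
  -- encode the witness
  refine ⟨Nat.pair (Bool.rec 0 1 b) (Nat.pair N k), ?_⟩
  have hd1 : (Nat.pair (Bool.rec 0 1 b) (Nat.pair N k)).unpair.1.bodd = b := by
    rw [Nat.unpair_pair]
    cases b <;> simp [Nat.bodd_zero, Nat.bodd_one]
  have hd2 : (Nat.pair (Bool.rec 0 1 b) (Nat.pair N k)).unpair.2.unpair.1 = N := by
    rw [Nat.unpair_pair, Nat.unpair_pair]
  have hd3 : (Nat.pair (Bool.rec 0 1 b) (Nat.pair N k)).unpair.2.unpair.2 = k := by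
    rw [Nat.unpair_pair, Nat.unpair_pair]
  rw [cond_iff_real, hd1, hd2, hd3, ← hτdef, ← hFdef, ← hLdef]
  exact hineq

/-! ### computability of the condition -/

section PRC
open Primrec

lemma primrec_allB : Primrec allB := by
  have e1 : Primrec₂ fun (_ : ℕ × List (List Bool)) (t : List Bool) => t ++ [false] :=
    Primrec.list_concat.comp₂ Primrec₂.right (Primrec₂.const false)
  have e2 : Primrec₂ fun (_ : ℕ × List (List Bool)) (t : List Bool) => t ++ [true] :=
    Primrec.list_concat.comp₂ Primrec₂.right (Primrec₂.const true)
  have e3 : Primrec₂ fun (p : ℕ × List (List Bool)) (t : List Bool) =>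
      [t ++ [false], t ++ [true]] :=
    Primrec.list_cons.comp₂ e1 (Primrec.list_cons.comp₂ e2 (Primrec₂.const []))
  have hstep : Primrec₂ fun (y : ℕ) (ih : List (List Bool)) =>
      ih.flatMap fun t => [t ++ [false], t ++ [true]] := by
    have := Primrec.list_flatMap (f := fun p : ℕ × List (List Bool) => p.2)
      (g := fun p t => [t ++ [false], t ++ [true]]) Primrec.snd e3
    exact this.to₂
  exact Primrec.nat_rec₁ [[]] hstep

lemma primrec_pfxB : Primrec₂ pfxB := by
  have h1 : Primrec fun a : (List Bool × List Bool) × ℕ => a.1.1[a.2]? :=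
    Primrec.list_getElem?.comp (fst.comp fst) snd
  have h2 : Primrec fun a : (List Bool × List Bool) × ℕ => a.1.2[a.2]? :=
    Primrec.list_getElem?.comp (snd.comp fst) snd
  have hbeq : ∀ a b : Option Bool,
      (@BEq.beq _ instBEqOfDecidableEq a b) = (a == b) := by decide
  have hp : Primrec₂ fun (p : List Bool × List Bool) (i : ℕ) => p.1[i]? == p.2[i]? :=
    Primrec₂.of_eq (Primrec.beq.comp h1 h2).to₂ fun p i => hbeq _ _
  have hcount : Primrec fun p : List Bool × List Bool =>
      (List.range p.1.length).countP fun i => p.1[i]? == p.2[i]? :=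
    primrec_countP (Primrec.list_range.comp (Primrec.list_length.comp fst)) hp
  have hbn : ∀ a b : ℕ, (@BEq.beq _ instBEqOfDecidableEq a b) = (a == b) := by
    intro a b; by_cases h : a = b <;> simp [h]
  exact Primrec₂.of_eq ((Primrec.beq.comp hcount (Primrec.list_length.comp fst)).to₂)
    fun p i => hbn _ _

lemma primrec_inF : Primrec₂ inF := by
  have hc : Primrec fun p : List (List Bool) × List Bool =>
      p.1.countP fun x => pfxB x p.2 :=
    primrec_countP fst (primrec_pfxB.comp snd (snd.comp fst))
  exact (PrimrecRel.comp Primrec.nat_lt (const 0) hc).decide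

lemma primrec_cnt : Primrec fun t : (List (List Bool) × List Bool) × ℕ =>
    cnt t.1.1 t.1.2 t.2 := by
  have hp : Primrec₂ fun (t : (List (List Bool) × List Bool) × ℕ) (τ : List Bool) =>
      inF t.1.1 τ && pfxB t.1.2 τ := by
    have h1 : Primrec fun a : ((List (List Bool) × List Bool) × ℕ) × List Bool =>
        inF a.1.1.1 a.2 := primrec_inF.comp (fst.comp (fst.comp fst)) snd
    have h2 : Primrec fun a : ((List (List Bool) × List Bool) × ℕ) × List Bool =>
        pfxB a.1.1.2 a.2 := primrec_pfxB.comp (snd.comp (fst.comp fst)) snd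
    exact (Primrec.and.comp h1 h2).to₂
  exact primrec_countP (primrec_allB.comp snd) hp

lemma primrec_maxLen : Primrec maxLen := by
  have h : Primrec₂ fun (_ : List (List Bool)) (p : List Bool × ℕ) =>
      max p.1.length p.2 :=
    (Primrec.nat_max.comp (Primrec.list_length.comp (fst.comp snd)) (snd.comp snd)).to₂
  exact Primrec.list_foldr Primrec.id (const 0) h

lemma primrec_condAB : Primrec fun t : (List (List Bool) × List Bool) × (ℕ × ℕ) =>
    condAB t.1.1 t.1.2 t.2.1 t.2.2 := by
  have pF : Primrec fun t : (List (List Bool) × List Bool) × (ℕ × ℕ) => t.1.1 := fst.comp fst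
  have pτ : Primrec fun t : (List (List Bool) × List Bool) × (ℕ × ℕ) => t.1.2 := snd.comp fst
  have ph : Primrec fun t : (List (List Bool) × List Bool) × (ℕ × ℕ) => t.2.1 := fst.comp snd
  have pk : Primrec fun t : (List (List Bool) × List Bool) × (ℕ × ℕ) => t.2.2 := snd.comp snd
  have pL : Primrec fun t : (List (List Bool) × List Bool) × (ℕ × ℕ) =>
      Lof t.1.1 t.1.2 :=
    Primrec.nat_max.comp (primrec_maxLen.comp pF) (Primrec.list_length.comp pτ)
  have pM : Primrec fun t : (List (List Bool) × List Bool) × (ℕ × ℕ) =>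
      Lof t.1.1 t.1.2 + t.2.2 + t.2.1 + 1 :=
    Primrec.succ.comp (nat_add.comp (nat_add.comp pL pk) ph)
  have pc1 : Primrec fun t : (List (List Bool) × List Bool) × (ℕ × ℕ) =>
      cnt t.1.1 [] (Lof t.1.1 t.1.2) :=
    primrec_cnt.comp ((pF.pair (const [])).pair pL)
  have pc2 : Primrec fun t : (List (List Bool) × List Bool) × (ℕ × ℕ) =>
      cnt t.1.1 t.1.2 (Lof t.1.1 t.1.2) :=
    primrec_cnt.comp ((pF.pair pτ).pair pL)
  have pA : Primrec fun t : (List (List Bool) × List Bool) × (ℕ × ℕ) =>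
      (cnt t.1.1 [] (Lof t.1.1 t.1.2) - cnt t.1.1 t.1.2 (Lof t.1.1 t.1.2))
        * 2 ^ ((Lof t.1.1 t.1.2 + t.2.2 + t.2.1 + 1) - Lof t.1.1 t.1.2)
        + 2 ^ ((Lof t.1.1 t.1.2 + t.2.2 + t.2.1 + 1) - (t.2.1 + 1)) :=
    nat_add.comp
      (nat_mul.comp (nat_sub.comp pc1 pc2)
        (primrec_pow.comp (const 2) (nat_sub.comp pM pL)))
      (primrec_pow.comp (const 2) (nat_sub.comp pM (Primrec.succ.comp ph)))
  have pB : Primrec fun t : (List (List Bool) × List Bool) × (ℕ × ℕ) =>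
      2 ^ ((Lof t.1.1 t.1.2 + t.2.2 + t.2.1 + 1) - t.2.2) :=
    primrec_pow.comp (const 2) (nat_sub.comp pM pk)
  exact (pA.pair (pB.pair pM)).of_eq fun t => by
    simp only [condAB, Lof]

lemma computable_ELst {e : ℕ → Option (List Bool)} (he : Computable e) :
    Computable (ELst e) := by
  have hh : Computable₂ fun (_ : ℕ) (p : ℕ × List (List Bool)) =>
      p.2 ++ (e p.1).toList := by
    have h1 : Computable fun x : ℕ × (ℕ × List (List Bool)) => x.2.2 :=
      Computable.snd.comp Computable.snd
    have h2 : Computable fun x : ℕ × (ℕ × List (List Bool)) => (e x.2.1).toList :=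
      (Primrec.optionToList.to_comp).comp (he.comp (Computable.fst.comp Computable.snd))
    exact (Computable.list_append.comp h1 h2).to₂
  exact (Computable.nat_rec Computable.id (Computable.const []) hh).of_eq fun m => by
    induction m with
    | zero => rfl
    | succ m ih => rw [ELst_succ, ← ih]; rfl

set_option maxHeartbeats 1000000 in
lemma computable_Cond {g : ℕ → ℚ} {e : ℕ → Option (List Bool)}
    (hg : Computable g) (he : Computable e) : Computable₂ (Cond g e) := by
  have ck : Computable fun x : List Bool × ℕ => x.2.unpair.2.unpair.2 :=
    (Primrec.snd.comp (Primrec.unpair.comp (Primrec.snd.comp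
      (Primrec.unpair.comp Primrec.snd)))).to_comp
  have cm : Computable fun x : List Bool × ℕ => x.2.unpair.2.unpair.1 :=
    (Primrec.fst.comp (Primrec.unpair.comp (Primrec.snd.comp
      (Primrec.unpair.comp Primrec.snd)))).to_comp
  have cb : Computable fun x : List Bool × ℕ => x.2.unpair.1.bodd :=
    (Primrec.nat_bodd.comp (Primrec.fst.comp (Primrec.unpair.comp Primrec.snd))).to_comp
  have cτ : Computable fun x : List Bool × ℕ => x.1 ++ [x.2.unpair.1.bodd] :=
    Primrec.list_concat.to_comp.comp Computable.fst cb
  have cF : Computable fun x : List Bool × ℕ => ELst e x.2.unpair.2.unpair.1 :=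
    (computable_ELst he).comp cm
  have clen : Computable fun x : List Bool × ℕ => x.1.length :=
    Computable.list_length.comp Computable.fst
  have cAB := primrec_condAB.to_comp.comp ((cF.pair cτ).pair (clen.pair ck))
  exact (primrec_qtest.to_comp.comp ((hg.comp ck).pair cAB)).of_eq fun x => rfl

end PRC

/-! ### the algorithm -/

def stepOpt (g : ℕ → ℚ) (e : ℕ → Option (List Bool)) (σ : List Bool) (n : ℕ) : Option Bool :=
  cond (Cond g e σ n) (some n.unpair.1.bodd) none

lemma computable_stepOpt {g : ℕ → ℚ} {e : ℕ → Option (List Bool)}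
    (hg : Computable g) (he : Computable e) :
    Computable₂ fun (p : ℕ × (ℕ × List Bool)) (n : ℕ) => stepOpt g e p.2.2 n := by
  have hc : Computable fun x : (ℕ × (ℕ × List Bool)) × ℕ => Cond g e x.1.2.2 x.2 :=
    (computable_Cond hg he).comp
      (Computable.snd.comp (Computable.snd.comp Computable.fst)) Computable.snd
  have hb : Computable fun x : (ℕ × (ℕ × List Bool)) × ℕ => some x.2.unpair.1.bodd :=
    Computable.option_some.comp ((Primrec.nat_bodd.comp
      (Primrec.fst.comp (Primrec.unpair.comp Primrec.snd))).to_comp)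
  exact ((Computable.cond hc hb (Computable.const none)).of_eq fun x => rfl).to₂

noncomputable def σfun (g : ℕ → ℚ) (e : ℕ → Option (List Bool)) : ℕ → List Bool
  | 0 => []
  | n + 1 =>
      haveI : Decidable (∃ c, Cond g e (σfun g e n) c = true) := Classical.propDecidable _
      if h : ∃ c, Cond g e (σfun g e n) c = true
      then σfun g e n ++ [(Nat.find h).unpair.1.bodd]
      else σfun g e n ++ [false]

lemma σfun_succ_ex {g : ℕ → ℚ} {e : ℕ → Option (List Bool)} {n : ℕ}
    (h : ∃ c, Cond g e (σfun g e n) c = true) :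
    σfun g e (n + 1) = σfun g e n ++ [(Nat.find h).unpair.1.bodd] := by
  rw [σfun]
  rw [dif_pos h]

lemma σfun_succ_cases (g : ℕ → ℚ) (e : ℕ → Option (List Bool)) (n : ℕ) :
    ∃ c : Bool, σfun g e (n + 1) = σfun g e n ++ [c] := by
  rw [σfun]
  split
  · exact ⟨_, rfl⟩
  · exact ⟨false, rfl⟩

lemma length_σfun (g : ℕ → ℚ) (e : ℕ → Option (List Bool)) :
    ∀ n, (σfun g e n).length = n := by
  intro n
  induction n with
  | zero => rfl
  | succ n ih =>
      obtain ⟨c, hc⟩ := σfun_succ_cases g e n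
      rw [hc]
      simp [ih]

noncomputable def αfun (g : ℕ → ℚ) (e : ℕ → Option (List Bool)) : ℕ → Bool :=
  fun n => ((σfun g e (n + 1)).reverse).headI

lemma restr_αfun (g : ℕ → ℚ) (e : ℕ → Option (List Bool)) :
    ∀ n, restr n (αfun g e) = σfun g e n := by
  intro n
  induction n with
  | zero => rfl
  | succ n ih =>
      obtain ⟨c, hc⟩ := σfun_succ_cases g e n
      rw [restr_succ, ih, hc]
      congr 1
      have : αfun g e n = c := by
        rw [αfun, hc]
        simp
      rw [this]

def partSeq (g : ℕ → ℚ) (e : ℕ → Option (List Bool)) : ℕ → Part (List Bool) :=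
  fun N => Nat.rec (Part.some [])
    (fun _ ih => ih.bind fun σ => (Nat.rfindOpt (stepOpt g e σ)).map fun b => σ ++ [b]) N

lemma partrec_partSeq {g : ℕ → ℚ} {e : ℕ → Option (List Bool)}
    (hg : Computable g) (he : Computable e) : Partrec (partSeq g e) := by
  have happ : Computable₂ fun (p : ℕ × (ℕ × List Bool)) (b : Bool) => p.2.2 ++ [b] :=
    (Primrec.list_concat.to_comp.comp
      (Computable.snd.comp (Computable.snd.comp Computable.fst)) Computable.snd).to₂
  have hh : Partrec₂ fun (N : ℕ) (p : ℕ × List Bool) =>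
      (Nat.rfindOpt (stepOpt g e p.2)).map fun b => p.2 ++ [b] := by
    have h1 : Partrec fun x : ℕ × (ℕ × List Bool) => Nat.rfindOpt (stepOpt g e x.2.2) :=
      Partrec.rfindOpt (computable_stepOpt hg he)
    exact (h1.map happ).to₂
  exact Partrec.nat_rec Computable.id ((Computable.const ([] : List Bool)).partrec) hh

lemma mem_rfindOpt_of_find {g : ℕ → ℚ} {e : ℕ → Option (List Bool)} {σ : List Bool}
    (h : ∃ c, Cond g e σ c = true) :
    (Nat.find h).unpair.1.bodd ∈ Nat.rfindOpt (stepOpt g e σ) := by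
  rw [Nat.rfindOpt]
  refine Part.mem_bind_iff.2 ⟨Nat.find h, ?_, ?_⟩
  · refine Nat.mem_rfind.2 ?_
    constructor
    · show _ ∈ Part.some _
      rw [Part.mem_some_iff]
      rw [stepOpt, Nat.find_spec h]
      rfl
    · intro m hm
      show _ ∈ Part.some _
      rw [Part.mem_some_iff]
      have := Nat.find_min h hm
      rcases hcm : Cond g e σ m with _ | _
      · rw [stepOpt, hcm]; rfl
      · exact absurd hcm this
  · rw [stepOpt, Nat.find_spec h]
    simp

lemma σfun_mem_partSeq {g : ℕ → ℚ} {e : ℕ → Option (List Bool)}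
    (hE : ∀ n, ∃ c, Cond g e (σfun g e n) c = true) :
    ∀ N, σfun g e N ∈ partSeq g e N := by
  intro N
  induction N with
  | zero => exact Part.mem_some _
  | succ N ih =>
      refine Part.mem_bind_iff.2 ⟨σfun g e N, ih, ?_⟩
      refine (Part.mem_map_iff _).2 ⟨(Nat.find (hE N)).unpair.1.bodd,
        mem_rfindOpt_of_find (hE N), (σfun_succ_ex (hE N)).symm⟩

lemma computable_αfun {g : ℕ → ℚ} {e : ℕ → Option (List Bool)}
    (hg : Computable g) (he : Computable e)
    (hE : ∀ n, ∃ c, Cond g e (σfun g e n) c = true) :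
    Computable (αfun g e) := by
  have hα : Partrec fun n : ℕ => (partSeq g e (n + 1)).map fun σ => σ.reverse.headI := by
    refine Partrec.map ((partrec_partSeq hg he).comp Computable.succ) ?_
    exact ((Primrec.list_headI.comp Primrec.list_reverse).to_comp.comp Computable.snd).to₂
  refine hα.of_eq_tot fun n => ?_
  exact (Part.mem_map_iff _).2 ⟨σfun g e (n + 1), σfun_mem_partSeq hE (n + 1), rfl⟩

/-! ### the invariant -/

lemma inv_σfun [IsProbabilityMeasure μ]
    (hμ : ∀ x : List Bool, μ (_root_.cylinder x) = (1 / 2 : ENNReal) ^ x.length)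
    {S : Set (List Bool)} {e : ℕ → Option (List Bool)} {g : ℕ → ℚ}
    (hSe : S = {x | ∃ n, e n = some x})
    (hg : ∀ k : ℕ, |(μ (openOf S)).toReal - (g k : ℝ)| < (2 : ℝ)⁻¹ ^ k)
    (hlt : μ (openOf S) < 1) :
    ∀ n, (μ (openOf S ∩ _root_.cylinder (σfun g e n))).toReal < (2 : ℝ)⁻¹ ^ n := by
  intro n
  induction n with
  | zero =>
      have h0 : σfun g e 0 = [] := rfl
      rw [h0, cylinder_nil, Set.inter_univ, pow_zero]
      have := (ENNReal.toReal_lt_toReal (measure_ne_top μ _) ENNReal.one_ne_top).2 hlt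
      simpa using this
  | succ n ih =>
      have hlen := length_σfun g e n
      have hex : ∃ c, Cond g e (σfun g e n) c = true :=
        complete hμ hSe hg _ (by rw [hlen]; exact ih)
      rw [σfun_succ_ex hex]
      have := sound hμ hSe hg (σfun g e n) (Nat.find hex) (Nat.find_spec hex)
      rwa [hlen] at this

end S13

/-- If `S` is r.e., `μ ⟦S⟧ < 1`, and `μ ⟦S⟧` is a computable real, then there is a
computable infinite binary sequence not in `⟦S⟧`. -/
theorem stmt_13 (μ : Measure (ℕ → Bool)) [IsProbabilityMeasure μ]
    (hμ : ∀ x : List Bool, μ (cylinder x) = (1 / 2 : ENNReal) ^ x.length)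
    (S : Set (List Bool)) (hre : RE S)
    (hlt : μ (openOf S) < 1)
    (hcomp : ∃ g : ℕ → ℚ, Computable g ∧
      ∀ k : ℕ, |(μ (openOf S)).toReal - (g k : ℝ)| < (2 : ℝ)⁻¹ ^ k) :
    ∃ α : ℕ → Bool, Computable α ∧ α ∉ openOf S := by
  obtain ⟨e, he, hSe⟩ := hre
  obtain ⟨g, hgc, hg⟩ := hcomp
  have hE : ∀ n, ∃ c, S13.Cond g e (S13.σfun g e n) c = true := fun n =>
    S13.complete hμ hSe hg _
      (by rw [S13.length_σfun]; exact S13.inv_σfun hμ hSe hg hlt n)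
  refine ⟨S13.αfun g e, S13.computable_αfun hgc he hE, ?_⟩
  intro hmem
  obtain ⟨x, hx, hαx⟩ := S13.mem_openOf.1 hmem
  have hrx := S13.mem_cylinder_iff.1 hαx
  have hσx : S13.σfun g e x.length = x := by
    rw [← S13.restr_αfun g e x.length]
    exact hrx
  have hinv := S13.inv_σfun hμ hSe hg hlt x.length
  rw [hσx] at hinv
  have hsub : cylinder x ⊆ openOf S := Set.subset_biUnion_of_mem hx
  rw [Set.inter_eq_self_of_subset_right hsub, hμ x] at hinv
  have hval : ((1 / 2 : ENNReal) ^ x.length).toReal = (2 : ℝ)⁻¹ ^ x.length := by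
    rw [ENNReal.toReal_pow]; norm_num
  rw [hval] at hinv
  exact lt_irrefl _ hinv
end

section
/- Let {a_{m,n}} be a doubly indexed family of nonnegative reals, g: ℕ⁺ → ℕ⁺, and d: ℕ⁺ → ℕ with d(m) ≥ 2, such that a_{m,n} < 1/n^{d(m)} for all n ≥ g(m) and 2/g(m) ≤ 2^{−m}. Then for every k ∈ ℕ, Σ_{m=1}^{k} Σ_{n ≥ g(m)·2^k} a_{m,n} + Σ_{m=k+1}^∞ (Σ_{n ≥ g(m)} a_{m,n}) < 2^{−(k−1)}. -/
/-- summability of a nonneg sequence dominated by `(n^2)⁻¹` on a tail. -/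
lemma tail_summable (b : ℕ → ℝ) (hb0 : ∀ n, 0 ≤ b n) (N : ℕ)
    (hle : ∀ n : ℕ, N ≤ n → b n ≤ ((n : ℝ) ^ 2)⁻¹) :
    Summable (fun n : {n : ℕ // N ≤ n} => b (n : ℕ)) := by
  refine Summable.of_nonneg_of_le (fun n => hb0 n) (fun n => hle n n.2) ?_
  exact ((Real.summable_nat_pow_inv.mpr one_lt_two).subtype _)

/-- tail sum bound: `∑_{n ≥ N} b n ≤ 2/N` when `b n ≤ (n^2)⁻¹` on the tail, `N ≥ 1`. -/
lemma tail_tsum_le (b : ℕ → ℝ) (hb0 : ∀ n, 0 ≤ b n) (N : ℕ) (hN : 1 ≤ N)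
    (hle : ∀ n : ℕ, N ≤ n → b n ≤ ((n : ℝ) ^ 2)⁻¹) :
    ∑' n : {n : ℕ // N ≤ n}, b (n : ℕ) ≤ 2 / N := by
  refine Summable.tsum_le_of_sum_le (tail_summable b hb0 N hle) ?_
  intro u
  set v : Finset ℕ := u.image Subtype.val with hv
  set M : ℕ := v.sup id + 1 with hM
  calc ∑ i ∈ u, b (i : ℕ) ≤ ∑ i ∈ u, (((i : ℕ) : ℝ) ^ 2)⁻¹ :=
        Finset.sum_le_sum (fun i _ => hle i i.2)
    _ = ∑ j ∈ v, ((j : ℝ) ^ 2)⁻¹ := by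
        rw [hv, Finset.sum_image (fun x _ y _ h => Subtype.val_injective h)]
    _ ≤ ∑ j ∈ Finset.Ioo (N - 1) M, ((j : ℝ) ^ 2)⁻¹ := by
        refine Finset.sum_le_sum_of_subset_of_nonneg ?_ (fun j _ _ => by positivity)
        intro j hj
        rw [hv] at hj
        obtain ⟨i, hi, rfl⟩ := Finset.mem_image.mp hj
        have h1 : N ≤ (i : ℕ) := i.2
        have h2 : (i : ℕ) ≤ v.sup id := Finset.le_sup (f := id) hj
        exact Finset.mem_Ioo.mpr ⟨by omega, by omega⟩
    _ ≤ 2 / ((N - 1 : ℕ) + 1 : ℝ) := sum_Ioo_inv_sq_le _ _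
    _ = 2 / N := by
        congr 1
        have : (N - 1 : ℕ) + 1 = N := by omega
        exact_mod_cast congrArg (Nat.cast : ℕ → ℝ) this

def tailEquiv (N : ℕ) : ℕ ≃ {m : ℕ // N ≤ m} where
  toFun := fun n => ⟨n + N, Nat.le_add_left _ _⟩
  invFun := fun m => (m : ℕ) - N
  left_inv := fun n => by simp
  right_inv := fun m => by ext; simp [Nat.sub_add_cancel m.2]

lemma geo_tail (k : ℕ) : ∑' m : {m : ℕ // k + 1 ≤ m}, ((2 : ℝ)⁻¹) ^ (m : ℕ)
    = 2 * (2 : ℝ)⁻¹ ^ (k + 1) := by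
  rw [← Equiv.tsum_eq (tailEquiv (k + 1))]
  simp only [tailEquiv, Equiv.coe_fn_mk]
  have h : ∀ n : ℕ, ((2 : ℝ)⁻¹) ^ (n + (k + 1)) = (2⁻¹) ^ (k+1) * (2⁻¹) ^ n := by
    intro n; rw [pow_add]; ring
  rw [tsum_congr h, tsum_mul_left, tsum_geometric_of_lt_one (by norm_num) (by norm_num)]
  norm_num; ring

lemma finsum_geo (k : ℕ) : ∑ m ∈ Finset.Icc 1 k, ((2 : ℝ)⁻¹) ^ m = 1 - (2 : ℝ)⁻¹ ^ k := by
  induction k with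
  | zero => simp
  | succ n ih => rw [Finset.sum_Icc_succ_top (by omega), ih]; ring

/-- The effective convergence estimate: if `a m n < 1/n^(d m)` for `n ≥ g m`, with
`d m ≥ 2` and `2/g(m) ≤ 2^(-m)`, then for every `k`,
`∑_{m=1}^{k} ∑_{n ≥ g(m)·2^k} a m n + ∑_{m ≥ k+1} ∑_{n ≥ g(m)} a m n < 2^{-(k-1)}`. -/
theorem stmt_17 (a : ℕ → ℕ → ℝ) (g : ℕ → ℕ) (d : ℕ → ℕ)
    (ha : ∀ m n, 0 ≤ a m n)
    (hd : ∀ m, 2 ≤ d m)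
    (hg : ∀ m, 0 < g m)
    (hbound : ∀ m n, g m ≤ n → a m n < 1 / (n : ℝ) ^ (d m))
    (hgm : ∀ m : ℕ, 1 ≤ m → (2 : ℝ) / (g m : ℝ) ≤ (2 : ℝ)⁻¹ ^ m)
    (k : ℕ) :
    (∑ m ∈ Finset.Icc 1 k, ∑' n : {n : ℕ // g m * 2 ^ k ≤ n}, a m (n : ℕ)) +
      (∑' m : {m : ℕ // k + 1 ≤ m}, ∑' n : {n : ℕ // g (m : ℕ) ≤ n}, a (m : ℕ) (n : ℕ)) <
    (2 : ℝ) ^ ((1 : ℤ) - (k : ℤ)) := by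
  have key : ∀ m N : ℕ, g m ≤ N → ∀ n : ℕ, N ≤ n → a m n ≤ ((n : ℝ) ^ 2)⁻¹ := by
    intro m N hgN n hn
    have h1 : g m ≤ n := le_trans hgN hn
    have hn1 : (1 : ℝ) ≤ (n : ℝ) := by exact_mod_cast le_trans (hg m) h1
    have hn2 : (0 : ℝ) < (n : ℝ) ^ 2 := by positivity
    calc a m n ≤ 1 / (n : ℝ) ^ (d m) := (hbound m n h1).le
      _ ≤ 1 / (n : ℝ) ^ 2 := by
          apply one_div_le_one_div_of_le hn2
          exact pow_le_pow_right₀ hn1 (hd m)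
      _ = ((n : ℝ) ^ 2)⁻¹ := one_div _
  -- first block
  have hA : ∀ m ∈ Finset.Icc 1 k,
      (∑' n : {n : ℕ // g m * 2 ^ k ≤ n}, a m (n : ℕ)) ≤ (2 : ℝ)⁻¹ ^ m * (2 : ℝ)⁻¹ ^ k := by
    intro m hm
    obtain ⟨hm1, _⟩ := Finset.mem_Icc.mp hm
    have hNpos : 0 < g m * 2 ^ k := Nat.mul_pos (hg m) (Nat.pow_pos (a := 2) (n := k) (by norm_num))
    have hle := tail_tsum_le (a m) (ha m) (g m * 2 ^ k) hNpos
      (key m _ (Nat.le_mul_of_pos_right _ (Nat.pow_pos (a := 2) (n := k) (by norm_num))))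
    refine hle.trans ?_
    have hgR : (0 : ℝ) < (g m : ℝ) := by exact_mod_cast hg m
    have : (2 : ℝ) / ((g m * 2 ^ k : ℕ) : ℝ) = (2 / (g m : ℝ)) * ((2 : ℝ) ^ k)⁻¹ := by
      push_cast
      field_simp
    rw [this]
    have h2 : ((2 : ℝ) ^ k)⁻¹ = (2 : ℝ)⁻¹ ^ k := by rw [inv_pow]
    rw [h2]
    exact mul_le_mul_of_nonneg_right (hgm m hm1) (by positivity)
  have hAsum : (∑ m ∈ Finset.Icc 1 k, ∑' n : {n : ℕ // g m * 2 ^ k ≤ n}, a m (n : ℕ))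
      ≤ (1 - (2 : ℝ)⁻¹ ^ k) * (2 : ℝ)⁻¹ ^ k := by
    calc _ ≤ ∑ m ∈ Finset.Icc 1 k, (2 : ℝ)⁻¹ ^ m * (2 : ℝ)⁻¹ ^ k := Finset.sum_le_sum hA
      _ = (∑ m ∈ Finset.Icc 1 k, (2 : ℝ)⁻¹ ^ m) * (2 : ℝ)⁻¹ ^ k := by
          rw [Finset.sum_mul]
      _ = (1 - (2 : ℝ)⁻¹ ^ k) * (2 : ℝ)⁻¹ ^ k := by rw [finsum_geo]
  -- second block
  have hgeo : Summable (fun n : ℕ => (2 : ℝ)⁻¹ ^ n) :=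
    summable_geometric_of_lt_one (by norm_num) (by norm_num)
  have hf : ∀ m : {m : ℕ // k + 1 ≤ m},
      (∑' n : {n : ℕ // g (m : ℕ) ≤ n}, a (m : ℕ) (n : ℕ)) ≤ (2 : ℝ)⁻¹ ^ (m : ℕ) := by
    intro m
    have hm1 : 1 ≤ (m : ℕ) := le_trans (Nat.le_add_left 1 k) m.2
    exact (tail_tsum_le (a m) (ha m) (g m) (hg m) (key m (g m) le_rfl)).trans (hgm m hm1)
  have hf0 : ∀ m : {m : ℕ // k + 1 ≤ m},
      0 ≤ (∑' n : {n : ℕ // g (m : ℕ) ≤ n}, a (m : ℕ) (n : ℕ)) :=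
    fun m => tsum_nonneg (fun n => ha _ _)
  have hfs : Summable (fun m : {m : ℕ // k + 1 ≤ m} =>
      ∑' n : {n : ℕ // g (m : ℕ) ≤ n}, a (m : ℕ) (n : ℕ)) :=
    Summable.of_nonneg_of_le hf0 hf (hgeo.subtype _)
  have hB : (∑' m : {m : ℕ // k + 1 ≤ m}, ∑' n : {n : ℕ // g (m : ℕ) ≤ n}, a (m : ℕ) (n : ℕ))
      ≤ (2 : ℝ)⁻¹ ^ k := by
    calc _ ≤ ∑' m : {m : ℕ // k + 1 ≤ m}, (2 : ℝ)⁻¹ ^ (m : ℕ) :=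
          Summable.tsum_le_tsum hf hfs (hgeo.subtype _)
      _ = 2 * (2 : ℝ)⁻¹ ^ (k + 1) := geo_tail k
      _ = (2 : ℝ)⁻¹ ^ k := by rw [pow_succ]; ring
  have hRHS : (2 : ℝ) ^ ((1 : ℤ) - (k : ℤ)) = 2 * (2 : ℝ)⁻¹ ^ k := by
    rw [zpow_sub₀ (two_ne_zero), zpow_one, zpow_natCast, div_eq_mul_inv, ← inv_pow]
  rw [hRHS]
  have ht : (0 : ℝ) < (2 : ℝ)⁻¹ ^ k := by positivity
  nlinarith [hAsum, hB, ht]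
end
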